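/- For nonnegative integers a, b with a + b ≥ 1, the word 0^a 10101 0^b is Ulam if and only if both a and b are even and at least one of a, b is zero. -/

import Mathlib

/-- Ulam words with fuel bounding the recursion depth (fuel ≥ length suffices). -/
def UlamN : ℕ → List Bool → Prop
  | 0, _ => False
  | n + 1, w =>
    w = [false] ∨ w = [true] ∨
      ∃! p : List Bool × List Bool,
        p.1 ≠ [] ∧ p.2 ≠ [] ∧ UlamN n p.1 ∧ UlamN n p.2 ∧ p.1 ≠ p.2 ∧ p.1 ++ p.2 = w

/-- A word over {0,1} (`false` = 0, `true` = 1) is Ulam. -/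
def IsUlam (w : List Bool) : Prop := UlamN w.length w

/-- The integer whose binary representation (most significant digit first) is `w`. -/
def binVal (w : List Bool) : ℕ := w.foldl (fun acc b => 2 * acc + b.toNat) 0


lemma ulamN_nil (n : ℕ) : ¬ UlamN n [] := by
  cases n with
  | zero => simp [UlamN]
  | succ n =>
    simp only [UlamN]
    rintro (h | h | ⟨p, ⟨h1, h2, _, _, _, h6⟩, _⟩)
    · simp at h
    · simp at h
    · rcases List.append_eq_nil_iff.mp h6 with ⟨e1, e2⟩; exact h1 e1

lemma ulamN_congr : ∀ (k : ℕ) (w : List Bool), w.length ≤ k → ∀ n m, w.length ≤ n → w.length ≤ m →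
    (UlamN n w ↔ UlamN m w) := by
  intro k
  induction k with
  | zero =>
    intro w hw n m _ _
    have : w = [] := List.length_eq_zero_iff.mp (Nat.le_zero.mp hw)
    subst this
    constructor <;> intro h <;> exact absurd h (ulamN_nil _)
  | succ k ih =>
    intro w hw n m hn hm
    rcases Nat.eq_zero_or_pos w.length with h0 | h0
    · have : w = [] := List.length_eq_zero_iff.mp h0
      subst this
      constructor <;> intro h <;> exact absurd h (ulamN_nil _)
    obtain ⟨n', rfl⟩ : ∃ n', n = n' + 1 := ⟨n - 1, by omega⟩
    obtain ⟨m', rfl⟩ : ∃ m', m = m' + 1 := ⟨m - 1, by omega⟩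
    simp only [UlamN]
    refine or_congr Iff.rfl (or_congr Iff.rfl (existsUnique_congr ?_))
    intro p
    constructor
    · rintro ⟨h1, h2, h3, h4, h5, h6⟩
      have l1 : p.1.length ≤ k := by
        have := congrArg List.length h6
        simp at this
        have : p.2.length ≠ 0 := fun h => h2 (List.length_eq_zero_iff.mp h)
        omega
      have l2 : p.2.length ≤ k := by
        have := congrArg List.length h6
        simp at this
        have : p.1.length ≠ 0 := fun h => h1 (List.length_eq_zero_iff.mp h)
        omega
      have n1 : p.1.length ≤ n' := by
        have := congrArg List.length h6; simp at this
        have : p.2.length ≠ 0 := fun h => h2 (List.length_eq_zero_iff.mp h)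
        omega
      have n2 : p.2.length ≤ n' := by
        have := congrArg List.length h6; simp at this
        have : p.1.length ≠ 0 := fun h => h1 (List.length_eq_zero_iff.mp h)
        omega
      have m1 : p.1.length ≤ m' := by
        have := congrArg List.length h6; simp at this
        have : p.2.length ≠ 0 := fun h => h2 (List.length_eq_zero_iff.mp h)
        omega
      have m2 : p.2.length ≤ m' := by
        have := congrArg List.length h6; simp at this
        have : p.1.length ≠ 0 := fun h => h1 (List.length_eq_zero_iff.mp h)
        omega
      exact ⟨h1, h2, (ih p.1 l1 n' m' n1 m1).mp h3, (ih p.2 l2 n' m' n2 m2).mp h4, h5, h6⟩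
    · rintro ⟨h1, h2, h3, h4, h5, h6⟩
      have l1 : p.1.length ≤ k := by
        have := congrArg List.length h6; simp at this
        have : p.2.length ≠ 0 := fun h => h2 (List.length_eq_zero_iff.mp h)
        omega
      have l2 : p.2.length ≤ k := by
        have := congrArg List.length h6; simp at this
        have : p.1.length ≠ 0 := fun h => h1 (List.length_eq_zero_iff.mp h)
        omega
      have n1 : p.1.length ≤ n' := by
        have := congrArg List.length h6; simp at this
        have : p.2.length ≠ 0 := fun h => h2 (List.length_eq_zero_iff.mp h)
        omega
      have n2 : p.2.length ≤ n' := by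
        have := congrArg List.length h6; simp at this
        have : p.1.length ≠ 0 := fun h => h1 (List.length_eq_zero_iff.mp h)
        omega
      have m1 : p.1.length ≤ m' := by
        have := congrArg List.length h6; simp at this
        have : p.2.length ≠ 0 := fun h => h2 (List.length_eq_zero_iff.mp h)
        omega
      have m2 : p.2.length ≤ m' := by
        have := congrArg List.length h6; simp at this
        have : p.1.length ≠ 0 := fun h => h1 (List.length_eq_zero_iff.mp h)
        omega
      exact ⟨h1, h2, (ih p.1 l1 n' m' n1 m1).mpr h3, (ih p.2 l2 n' m' n2 m2).mpr h4, h5, h6⟩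

lemma ulamN_iff_isUlam {w : List Bool} {n : ℕ} (h : w.length ≤ n) : UlamN n w ↔ IsUlam w :=
  ulamN_congr w.length w le_rfl n w.length h le_rfl

def D (w : List Bool) (p : List Bool × List Bool) : Prop :=
  p.1 ≠ [] ∧ p.2 ≠ [] ∧ IsUlam p.1 ∧ IsUlam p.2 ∧ p.1 ≠ p.2 ∧ p.1 ++ p.2 = w

lemma isUlam_iff_D {w : List Bool} (h : 2 ≤ w.length) : IsUlam w ↔ ∃! p, D w p := by
  obtain ⟨k, hk⟩ : ∃ k, w.length = k + 1 := ⟨w.length - 1, by omega⟩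
  unfold IsUlam
  rw [hk]
  simp only [UlamN]
  have hf : w ≠ [false] := by intro e; subst e; simp at h
  have ht : w ≠ [true] := by intro e; subst e; simp at h
  rw [or_iff_right hf, or_iff_right ht]
  apply existsUnique_congr
  intro p
  unfold D
  constructor
  · rintro ⟨h1, h2, h3, h4, h5, h6⟩
    have hl := congrArg List.length h6
    simp at hl
    have e1 : p.1.length ≠ 0 := fun h => h1 (List.length_eq_zero_iff.mp h)
    have e2 : p.2.length ≠ 0 := fun h => h2 (List.length_eq_zero_iff.mp h)
    exact ⟨h1, h2, (ulamN_iff_isUlam (by omega)).mp h3, (ulamN_iff_isUlam (by omega)).mp h4, h5, h6⟩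
  · rintro ⟨h1, h2, h3, h4, h5, h6⟩
    have hl := congrArg List.length h6
    simp at hl
    have e1 : p.1.length ≠ 0 := fun h => h1 (List.length_eq_zero_iff.mp h)
    have e2 : p.2.length ≠ 0 := fun h => h2 (List.length_eq_zero_iff.mp h)
    exact ⟨h1, h2, (ulamN_iff_isUlam (by omega)).mpr h3, (ulamN_iff_isUlam (by omega)).mpr h4, h5, h6⟩

def Z (n : ℕ) : List Bool := List.replicate n false
def W1 (a b : ℕ) : List Bool := Z a ++ [true] ++ Z b
def W2 (a b : ℕ) : List Bool := Z a ++ [true, false, true] ++ Z b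
def W3 (a b : ℕ) : List Bool := Z a ++ [true, false, true, false, true] ++ Z b

@[simp] lemma Z_zero : Z 0 = [] := rfl
@[simp] lemma Z_succ (n : ℕ) : Z (n + 1) = false :: Z n := rfl
@[simp] lemma Z_length (n : ℕ) : (Z n).length = n := List.length_replicate
@[simp] lemma Z_ne_nil {n : ℕ} (h : 0 < n) : Z n ≠ [] := by
  intro e; have := congrArg List.length e; simp at this; omega
@[simp] lemma W1_length (a b : ℕ) : (W1 a b).length = a + b + 1 := by simp [W1]; omega
@[simp] lemma W2_length (a b : ℕ) : (W2 a b).length = a + b + 3 := by simp [W2]; omega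
@[simp] lemma W3_length (a b : ℕ) : (W3 a b).length = a + b + 5 := by simp [W3]; omega
lemma W1_ne_nil (a b : ℕ) : W1 a b ≠ [] := by
  intro h; have := congrArg List.length h; simp at this
lemma W2_ne_nil (a b : ℕ) : W2 a b ≠ [] := by
  intro h; have := congrArg List.length h; simp at this
lemma W3_ne_nil (a b : ℕ) : W3 a b ≠ [] := by
  intro h; have := congrArg List.length h; simp at this

@[simp] lemma Z_count (n : ℕ) : (Z n).count true = 0 := by simp [Z, List.count_replicate]
@[simp] lemma W1_count (a b : ℕ) : (W1 a b).count true = 1 := by simp [W1]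
@[simp] lemma W2_count (a b : ℕ) : (W2 a b).count true = 2 := by simp [W2]
@[simp] lemma W3_count (a b : ℕ) : (W3 a b).count true = 3 := by simp [W3]

lemma ne_of_count {l1 l2 : List Bool} (h : l1.count true ≠ l2.count true) : l1 ≠ l2 :=
  fun e => h (by rw [e])

/-- a prefix of a replicate is a replicate -/
lemma eq_Z_of_prefix {l m : List Bool} {n : ℕ} (h : l ++ m = Z n) :
    l = Z l.length ∧ m = Z m.length ∧ l.length + m.length = n := by
  have hmem : ∀ x ∈ l ++ m, x = false := by
    rw [h]; intro x hx; exact List.eq_of_mem_replicate hx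
  have h1 : l = Z l.length := List.eq_replicate_length.mpr fun b hb => hmem b (List.mem_append_left m hb)
  have h2 : m = Z m.length := List.eq_replicate_length.mpr fun b hb => hmem b (List.mem_append_right l hb)
  have := congrArg List.length h
  simp at this
  exact ⟨h1, h2, this⟩

/-- classification of splits of Z a ++ M ++ Z b -/
lemma split3 {q1 q2 : List Bool} {a b : ℕ} {M : List Bool}
    (h : q1 ++ q2 = Z a ++ M ++ Z b) :
    (∃ i, i ≤ a ∧ q1 = Z i ∧ q2 = Z (a - i) ++ M ++ Z b) ∨
    (∃ c d, c ++ d = M ∧ q1 = Z a ++ c ∧ q2 = d ++ Z b) ∨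
    (∃ j, j ≤ b ∧ q1 = Z a ++ M ++ Z (b - j) ∧ q2 = Z j) := by
  rw [List.append_assoc] at h
  rcases List.append_eq_append_iff.mp h with ⟨m, hm1, hm2⟩ | ⟨m, hm1, hm2⟩
  · -- Z a = q1 ++ m, q2 = m ++ (M ++ Z b)
    obtain ⟨e1, e2, e3⟩ := eq_Z_of_prefix hm1.symm
    left
    refine ⟨q1.length, by omega, e1, ?_⟩
    rw [hm2, e2]
    have : m.length = a - q1.length := by omega
    rw [this, List.append_assoc]
  · -- q1 = Z a ++ m, M ++ Z b = m ++ q2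
    rcases List.append_eq_append_iff.mp hm2.symm with ⟨c, hc1, hc2⟩ | ⟨c, hc1, hc2⟩
    ·
      right; left
      exact ⟨m, c, hc1.symm, hm1, hc2⟩
    · right; right
      obtain ⟨e1, e2, e3⟩ := eq_Z_of_prefix hc2.symm
      refine ⟨q2.length, by omega, ?_, e2⟩
      rw [hm1, hc1, e1]
      have : c.length = b - q2.length := by omega
      rw [this, List.append_assoc]

lemma isUlam_false : IsUlam [false] := by
  simp [IsUlam, UlamN]

lemma isUlam_true : IsUlam [true] := by
  simp [IsUlam, UlamN]

lemma not_isUlam_Z : ∀ n, 2 ≤ n → ¬ IsUlam (Z n) := by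
  intro n
  induction n using Nat.strong_induction_on with
  | _ n ih =>
    intro hn h
    rw [isUlam_iff_D (by simp; omega)] at h
    obtain ⟨p, ⟨h1, h2, h3, h4, h5, h6⟩, -⟩ := h
    obtain ⟨e1, e2, e3⟩ := eq_Z_of_prefix h6
    have l1 : p.1.length ≠ 0 := fun e => h1 (List.length_eq_zero_iff.mp e)
    have l2 : p.2.length ≠ 0 := fun e => h2 (List.length_eq_zero_iff.mp e)
    have c1 : p.1.length = 1 := by
      by_contra hc
      exact ih p.1.length (by omega) (by omega) (e1 ▸ h3)
    have c2 : p.2.length = 1 := by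
      by_contra hc
      exact ih p.2.length (by omega) (by omega) (e2 ▸ h4)
    apply h5
    rw [e1, e2, c1, c2]

lemma isUlam_Z {n : ℕ} : IsUlam (Z n) ↔ n = 1 := by
  constructor
  · intro h
    match n, h with
    | 0, h => exact absurd h (ulamN_nil _)
    | 1, _ => rfl
    | (n+2), h => exact absurd h (not_isUlam_Z _ (by omega))
  · rintro rfl
    exact isUlam_false

-- concatenation identities
lemma cat_W1_l (a b : ℕ) : [false] ++ W1 a b = W1 (a+1) b := by simp [W1]
lemma cat_W1_r (a b : ℕ) : W1 a b ++ [false] = W1 a (b+1) := by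
  simp [W1, Z, List.replicate_succ']
lemma cat_W2_l (a b : ℕ) : [false] ++ W2 a b = W2 (a+1) b := by simp [W2]
lemma cat_W2_r (a b : ℕ) : W2 a b ++ [false] = W2 a (b+1) := by
  simp [W2, Z, List.replicate_succ']
lemma cat_W3_l (a b : ℕ) : [false] ++ W3 a b = W3 (a+1) b := by simp [W3]
lemma cat_W3_r (a b : ℕ) : W3 a b ++ [false] = W3 a (b+1) := by
  simp [W3, Z, List.replicate_succ']
lemma cat_W2_mid1 (a b : ℕ) : W1 a 0 ++ W1 1 b = W2 a b := by
  simp [W1, W2, Z]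
lemma cat_W2_mid2 (a b : ℕ) : W1 a 1 ++ W1 0 b = W2 a b := by
  simp [W1, W2, Z]
lemma cat_W3_mid1 (a b : ℕ) : W1 a 0 ++ W2 1 b = W3 a b := by
  simp [W1, W2, W3, Z]
lemma cat_W3_mid2 (a b : ℕ) : W1 a 1 ++ W2 0 b = W3 a b := by
  simp [W1, W2, W3, Z]
lemma cat_W3_mid3 (a b : ℕ) : W2 a 0 ++ W1 1 b = W3 a b := by
  simp [W1, W2, W3, Z]
lemma cat_W3_mid4 (a b : ℕ) : W2 a 1 ++ W1 0 b = W3 a b := by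
  simp [W1, W2, W3, Z]

lemma D_W1_cases {a b : ℕ} {p : List Bool × List Bool} (h : D (W1 a b) p) :
    (∃ a', a = a' + 1 ∧ p = ([false], W1 a' b)) ∨
    (∃ b', b = b' + 1 ∧ p = (W1 a b', [false])) := by
  obtain ⟨p1, p2⟩ := p
  obtain ⟨h1, h2, h3, h4, h5, h6⟩ := h
  dsimp only at h1 h2 h3 h4 h5 h6
  rw [W1] at h6
  rcases split3 h6 with ⟨i, hi, e1, e2⟩ | ⟨c, d, hcd, e1, e2⟩ | ⟨j, hj, e1, e2⟩
  · have hi1 : i = 1 := isUlam_Z.mp (e1 ▸ h3)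
    subst hi1
    have ha : 1 ≤ a := hi
    left
    refine ⟨a - 1, by omega, ?_⟩
    simp only [Prod.mk.injEq]
    constructor
    · rw [e1]; rfl
    · rw [e2, W1]
  · rcases c with _ | ⟨x, c⟩
    · -- c = [], p1 = Z a
      simp only [List.nil_append] at hcd
      subst hcd
      have ha : a = 1 := isUlam_Z.mp (by rw [e1] at h3; simpa using h3)
      left
      refine ⟨0, by omega, ?_⟩
      simp only [Prod.mk.injEq]
      subst ha
      exact ⟨by rw [e1]; rfl, by rw [e2, W1]; simp⟩
    · simp only [List.cons_append, List.cons.injEq] at hcd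
      obtain ⟨rfl, hcd⟩ := hcd
      rcases c with _ | ⟨x, c⟩
      · -- c = [true], d = []
        simp only [List.nil_append] at hcd
        subst hcd
        have hb : b = 1 := isUlam_Z.mp (by rw [e2] at h4; simpa using h4)
        right
        refine ⟨0, by omega, ?_⟩
        simp only [Prod.mk.injEq]
        subst hb
        constructor
        · rw [e1, W1]; simp
        · rw [e2]; simp [Z]
      · simp at hcd
  · have hj1 : j = 1 := isUlam_Z.mp (e2 ▸ h4)
    subst hj1
    right
    refine ⟨b - 1, by omega, ?_⟩
    simp only [Prod.mk.injEq]
    constructor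
    · rw [e1, W1]
    · rw [e2]; rfl

lemma D_W2_cases {a b : ℕ} {p : List Bool × List Bool} (h : D (W2 a b) p) :
    (∃ a', a = a' + 1 ∧ p = ([false], W2 a' b)) ∨
    p = (W1 a 0, W1 1 b) ∨ p = (W1 a 1, W1 0 b) ∨
    (∃ b', b = b' + 1 ∧ p = (W2 a b', [false])) := by
  obtain ⟨p1, p2⟩ := p
  obtain ⟨h1, h2, h3, h4, h5, h6⟩ := h
  dsimp only at h1 h2 h3 h4 h5 h6
  rw [W2] at h6
  rcases split3 h6 with ⟨i, hi, e1, e2⟩ | ⟨c, d, hcd, e1, e2⟩ | ⟨j, hj, e1, e2⟩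
  · have hi1 : i = 1 := isUlam_Z.mp (e1 ▸ h3)
    subst hi1
    left
    refine ⟨a - 1, by omega, ?_⟩
    simp only [Prod.mk.injEq]
    exact ⟨by rw [e1]; rfl, by rw [e2, W2]⟩
  · rcases c with _ | ⟨x, c⟩
    · simp only [List.nil_append] at hcd
      subst hcd
      have ha : a = 1 := isUlam_Z.mp (by rw [e1] at h3; simpa using h3)
      left
      refine ⟨0, by omega, ?_⟩
      simp only [Prod.mk.injEq]
      subst ha
      exact ⟨by rw [e1]; rfl, by rw [e2, W2]; simp⟩
    · simp only [List.cons_append, List.cons.injEq] at hcd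
      obtain ⟨rfl, hcd⟩ := hcd
      rcases c with _ | ⟨x, c⟩
      · -- c = [t], d = [f,t]
        simp only [List.nil_append] at hcd
        subst hcd
        right; left
        simp only [Prod.mk.injEq]
        exact ⟨by rw [e1, W1]; simp, by rw [e2, W1]; simp [Z]⟩
      · simp only [List.cons_append, List.cons.injEq] at hcd
        obtain ⟨rfl, hcd⟩ := hcd
        rcases c with _ | ⟨x, c⟩
        · -- c = [t,f], d = [t]
          simp only [List.nil_append] at hcd
          subst hcd
          right; right; left
          simp only [Prod.mk.injEq]
          exact ⟨by rw [e1, W1]; simp [Z], by rw [e2, W1]; simp [Z]⟩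
        · simp only [List.cons_append, List.cons.injEq] at hcd
          obtain ⟨rfl, hcd⟩ := hcd
          rcases c with _ | ⟨x, c⟩
          · -- c = [t,f,t], d = []
            simp only [List.nil_append] at hcd
            subst hcd
            have hb : b = 1 := isUlam_Z.mp (by rw [e2] at h4; simpa using h4)
            right; right; right
            refine ⟨0, by omega, ?_⟩
            simp only [Prod.mk.injEq]
            subst hb
            exact ⟨by rw [e1, W2]; simp, by rw [e2]; simp [Z]⟩
          · simp at hcd
  · have hj1 : j = 1 := isUlam_Z.mp (e2 ▸ h4)
    subst hj1
    right; right; right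
    refine ⟨b - 1, by omega, ?_⟩
    simp only [Prod.mk.injEq]
    exact ⟨by rw [e1, W2], by rw [e2]; rfl⟩

lemma D_W3_cases {a b : ℕ} {p : List Bool × List Bool} (h : D (W3 a b) p) :
    (∃ a', a = a' + 1 ∧ p = ([false], W3 a' b)) ∨
    p = (W1 a 0, W2 1 b) ∨ p = (W1 a 1, W2 0 b) ∨
    p = (W2 a 0, W1 1 b) ∨ p = (W2 a 1, W1 0 b) ∨
    (∃ b', b = b' + 1 ∧ p = (W3 a b', [false])) := by
  obtain ⟨p1, p2⟩ := p
  obtain ⟨h1, h2, h3, h4, h5, h6⟩ := h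
  dsimp only at h1 h2 h3 h4 h5 h6
  rw [W3] at h6
  rcases split3 h6 with ⟨i, hi, e1, e2⟩ | ⟨c, d, hcd, e1, e2⟩ | ⟨j, hj, e1, e2⟩
  · have hi1 : i = 1 := isUlam_Z.mp (e1 ▸ h3)
    subst hi1
    left
    refine ⟨a - 1, by omega, ?_⟩
    simp only [Prod.mk.injEq]
    exact ⟨by rw [e1]; rfl, by rw [e2, W3]⟩
  · rcases c with _ | ⟨x, c⟩
    · simp only [List.nil_append] at hcd
      subst hcd
      have ha : a = 1 := isUlam_Z.mp (by rw [e1] at h3; simpa using h3)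
      left
      refine ⟨0, by omega, ?_⟩
      simp only [Prod.mk.injEq]
      subst ha
      exact ⟨by rw [e1]; rfl, by rw [e2, W3]; simp⟩
    · simp only [List.cons_append, List.cons.injEq] at hcd
      obtain ⟨rfl, hcd⟩ := hcd
      rcases c with _ | ⟨x, c⟩
      · -- c = [t]
        simp only [List.nil_append] at hcd
        subst hcd
        right; left
        simp only [Prod.mk.injEq]
        exact ⟨by rw [e1, W1]; simp, by rw [e2, W2]; simp [Z]⟩
      · simp only [List.cons_append, List.cons.injEq] at hcd
        obtain ⟨rfl, hcd⟩ := hcd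
        rcases c with _ | ⟨x, c⟩
        · -- c = [t,f]
          simp only [List.nil_append] at hcd
          subst hcd
          right; right; left
          simp only [Prod.mk.injEq]
          exact ⟨by rw [e1, W1]; simp [Z], by rw [e2, W2]; simp [Z]⟩
        · simp only [List.cons_append, List.cons.injEq] at hcd
          obtain ⟨rfl, hcd⟩ := hcd
          rcases c with _ | ⟨x, c⟩
          · -- c = [t,f,t]
            simp only [List.nil_append] at hcd
            subst hcd
            right; right; right; left
            simp only [Prod.mk.injEq]
            exact ⟨by rw [e1, W2]; simp, by rw [e2, W1]; simp [Z]⟩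
          · simp only [List.cons_append, List.cons.injEq] at hcd
            obtain ⟨rfl, hcd⟩ := hcd
            rcases c with _ | ⟨x, c⟩
            · -- c = [t,f,t,f]
              simp only [List.nil_append] at hcd
              subst hcd
              right; right; right; right; left
              simp only [Prod.mk.injEq]
              exact ⟨by rw [e1, W2]; simp [Z], by rw [e2, W1]; simp [Z]⟩
            · simp only [List.cons_append, List.cons.injEq] at hcd
              obtain ⟨rfl, hcd⟩ := hcd
              rcases c with _ | ⟨x, c⟩
              · -- c = [t,f,t,f,t], d = []
                simp only [List.nil_append] at hcd
                subst hcd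
                have hb : b = 1 := isUlam_Z.mp (by rw [e2] at h4; simpa using h4)
                right; right; right; right; right
                refine ⟨0, by omega, ?_⟩
                simp only [Prod.mk.injEq]
                subst hb
                exact ⟨by rw [e1, W3]; simp, by rw [e2]; simp [Z]⟩
              · simp at hcd
  · have hj1 : j = 1 := isUlam_Z.mp (e2 ▸ h4)
    subst hj1
    right; right; right; right; right
    refine ⟨b - 1, by omega, ?_⟩
    simp only [Prod.mk.injEq]
    exact ⟨by rw [e1, W3], by rw [e2]; rfl⟩

lemma D_reverse {w : List Bool} {p : List Bool × List Bool}
    (IH : ∀ v : List Bool, v.length < w.length → (IsUlam v.reverse ↔ IsUlam v))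
    (h : D w p) : D w.reverse (p.2.reverse, p.1.reverse) := by
  obtain ⟨h1, h2, h3, h4, h5, h6⟩ := h
  have hl := congrArg List.length h6
  simp at hl
  have l1 : p.1.length ≠ 0 := fun e => h1 (List.length_eq_zero_iff.mp e)
  have l2 : p.2.length ≠ 0 := fun e => h2 (List.length_eq_zero_iff.mp e)
  refine ⟨by simp [h2], by simp [h1], ?_, ?_, ?_, ?_⟩
  · exact (IH p.2 (by omega)).mpr h4
  · exact (IH p.1 (by omega)).mpr h3
  · dsimp only
    intro e
    exact h5 (List.reverse_injective e).symm
  · dsimp only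
    rw [← List.reverse_append, h6]

lemma exu_reverse {w : List Bool}
    (IH : ∀ v : List Bool, v.length < w.length → (IsUlam v.reverse ↔ IsUlam v))
    (h : ∃! p, D w p) : ∃! p, D w.reverse p := by
  obtain ⟨p, hp, hu⟩ := h
  refine ⟨(p.2.reverse, p.1.reverse), D_reverse IH hp, ?_⟩
  rintro q hq
  have IH' : ∀ v : List Bool, v.length < w.reverse.length → (IsUlam v.reverse ↔ IsUlam v) := by
    simpa using IH
  have hq' := D_reverse IH' hq
  rw [List.reverse_reverse] at hq'
  have e := hu _ hq'
  rw [Prod.ext_iff] at e ⊢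
  obtain ⟨e1, e2⟩ := e
  dsimp only at e1 e2 ⊢
  constructor
  · rw [← List.reverse_reverse q.1, e2]
  · rw [← List.reverse_reverse q.2, e1]

lemma isUlam_reverse (w : List Bool) : IsUlam w.reverse ↔ IsUlam w := by
  suffices H : ∀ n (w : List Bool), w.length ≤ n → (IsUlam w.reverse ↔ IsUlam w) from
    H w.length w le_rfl
  intro n
  induction n with
  | zero =>
    intro w hw
    have : w = [] := List.length_eq_zero_iff.mp (by omega)
    subst this; simp
  | succ n ih =>
    intro w hw
    rcases Nat.lt_or_ge w.length 2 with h2 | h2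
    · match w, h2 with
      | [], _ => simp
      | [x], _ => simp
    · have IH : ∀ v : List Bool, v.length < w.length → (IsUlam v.reverse ↔ IsUlam v) :=
        fun v hv => ih v (by omega)
      rw [isUlam_iff_D h2, isUlam_iff_D (by simpa using h2)]
      constructor
      · intro h
        have IH' : ∀ v : List Bool, v.length < w.reverse.length → (IsUlam v.reverse ↔ IsUlam v) := by
          simpa using IH
        have := exu_reverse IH' h
        rwa [List.reverse_reverse] at this
      · exact exu_reverse IH

@[simp] lemma Z_reverse (n : ℕ) : (Z n).reverse = Z n := by simp [Z]
lemma W1_reverse (a b : ℕ) : (W1 a b).reverse = W1 b a := by simp [W1]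
lemma W2_reverse (a b : ℕ) : (W2 a b).reverse = W2 b a := by
  simp [W2]
lemma W3_reverse (a b : ℕ) : (W3 a b).reverse = W3 b a := by
  simp [W3]

lemma isUlam_W1_symm (a b : ℕ) : IsUlam (W1 a b) ↔ IsUlam (W1 b a) := by
  rw [← isUlam_reverse (W1 b a), W1_reverse]
lemma isUlam_W2_symm (a b : ℕ) : IsUlam (W2 a b) ↔ IsUlam (W2 b a) := by
  rw [← isUlam_reverse (W2 b a), W2_reverse]
lemma isUlam_W3_symm (a b : ℕ) : IsUlam (W3 a b) ↔ IsUlam (W3 b a) := by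
  rw [← isUlam_reverse (W3 b a), W3_reverse]

lemma isUlam_W1_a0 (a : ℕ) : IsUlam (W1 a 0) := by
  induction a with
  | zero =>
    have h : W1 0 0 = [true] := by simp [W1]
    rw [h]; exact isUlam_true
  | succ a ih =>
    rw [isUlam_iff_D (by simp)]
    refine ⟨([false], W1 a 0), ⟨by simp, W1_ne_nil a 0, isUlam_false, ih, ?_, cat_W1_l a 0⟩, ?_⟩
    · apply ne_of_count; simp
    · rintro q hq
      rcases D_W1_cases hq with ⟨a', ha, rfl⟩ | ⟨b', hb, rfl⟩
      · obtain rfl : a' = a := by omega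
        rfl
      · omega

lemma isUlam_W1_0b (b : ℕ) : IsUlam (W1 0 b) := (isUlam_W1_symm 0 b).mpr (isUlam_W1_a0 b)

lemma isUlam_W1_a1 (a : ℕ) : IsUlam (W1 a 1) ↔ Even a := by
  induction a with
  | zero =>
    have h : IsUlam (W1 0 1) := by
      rw [isUlam_iff_D (by simp)]
      refine ⟨(W1 0 0, [false]), ⟨W1_ne_nil 0 0, by simp, isUlam_W1_a0 0, isUlam_false, ?_, cat_W1_r 0 0⟩, ?_⟩
      · apply ne_of_count; simp
      · rintro q hq
        rcases D_W1_cases hq with ⟨a', ha, rfl⟩ | ⟨b', hb, rfl⟩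
        · omega
        · obtain rfl : b' = 0 := by omega
          rfl
    simp [h]
  | succ a ih =>
    by_cases hEa : Even a
    · have hOdd : ¬ Even (a + 1) := by simp [Nat.even_add_one, hEa]
      simp only [hOdd, iff_false]
      rw [isUlam_iff_D (by simp)]
      rintro ⟨p, hp, hu⟩
      have e1 := hu ([false], W1 a 1)
        ⟨by simp, W1_ne_nil a 1, isUlam_false, ih.mpr hEa, by apply ne_of_count; simp, cat_W1_l a 1⟩
      have e2 := hu (W1 (a+1) 0, [false])
        ⟨W1_ne_nil _ _, by simp, isUlam_W1_a0 _, isUlam_false, by apply ne_of_count; simp, cat_W1_r _ 0⟩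
      have : ([false] : List Bool) = W1 (a+1) 0 := congrArg Prod.fst (e1.trans e2.symm)
      have := congrArg (List.count true) this
      simp at this
    · have hOdd : Even (a + 1) := Nat.even_add_one.mpr hEa
      simp only [hOdd, iff_true]
      rw [isUlam_iff_D (by simp)]
      refine ⟨(W1 (a+1) 0, [false]),
        ⟨W1_ne_nil _ _, by simp, isUlam_W1_a0 _, isUlam_false, by apply ne_of_count; simp, cat_W1_r _ 0⟩, ?_⟩
      rintro q hq
      rcases D_W1_cases hq with ⟨a', ha, rfl⟩ | ⟨b', hb, rfl⟩
      · obtain rfl : a' = a := by omega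
        exact absurd (ih.mp hq.2.2.2.1) hEa
      · obtain rfl : b' = 0 := by omega
        rfl

lemma isUlam_W1_1b (b : ℕ) : IsUlam (W1 1 b) ↔ Even b := by
  rw [isUlam_W1_symm]; exact isUlam_W1_a1 b

lemma not_isUlam_W1_11 : ¬ IsUlam (W1 1 1) := by
  rw [isUlam_W1_a1]; simp [Nat.even_iff]

lemma ne_of_length {l1 l2 : List Bool} (h : l1.length ≠ l2.length) : l1 ≠ l2 :=
  fun e => h (by rw [e])

lemma isUlam_W2_0b (b : ℕ) : IsUlam (W2 0 b) ↔ Odd b ∧ 3 ≤ b := by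
  induction b with
  | zero =>
    have hR : ¬(Odd 0 ∧ 3 ≤ 0) := by rintro ⟨-, h⟩; omega
    refine iff_of_false ?_ hR
    rw [isUlam_iff_D (by simp)]
    rintro ⟨p, -, hu⟩
    have e1 := hu (W1 0 0, W1 1 0)
      ⟨W1_ne_nil _ _, W1_ne_nil _ _, isUlam_W1_a0 0, isUlam_W1_a0 1,
        ne_of_length (by simp), cat_W2_mid1 0 0⟩
    have e2 := hu (W1 0 1, W1 0 0)
      ⟨W1_ne_nil _ _, W1_ne_nil _ _, isUlam_W1_0b 1, isUlam_W1_a0 0,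
        ne_of_length (by simp), cat_W2_mid2 0 0⟩
    have e := congrArg Prod.fst (e1.trans e2.symm)
    have := congrArg List.length e
    simp at this
  | succ n ih =>
    by_cases hE : Even (n + 1)
    · have hR : ¬(Odd (n+1) ∧ 3 ≤ n+1) := by
        rintro ⟨h, -⟩; rw [Nat.odd_iff] at h; rw [Nat.even_iff] at hE; omega
      have hn1 : 1 ≤ n := by rw [Nat.even_iff] at hE; omega
      refine iff_of_false ?_ hR
      rw [isUlam_iff_D (by simp)]
      rintro ⟨p, -, hu⟩
      have e1 := hu (W1 0 0, W1 1 (n+1))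
        ⟨W1_ne_nil _ _, W1_ne_nil _ _, isUlam_W1_a0 0, (isUlam_W1_1b (n+1)).mpr hE,
          ne_of_length (by simp <;> omega), cat_W2_mid1 0 (n+1)⟩
      have e2 := hu (W1 0 1, W1 0 (n+1))
        ⟨W1_ne_nil _ _, W1_ne_nil _ _, isUlam_W1_0b 1, isUlam_W1_0b (n+1),
          ne_of_length (by simp <;> omega), cat_W2_mid2 0 (n+1)⟩
      have e := congrArg Prod.fst (e1.trans e2.symm)
      have := congrArg List.length e
      simp at this
    · rcases Nat.eq_zero_or_pos n with rfl | hn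
      · -- b = 1 : no decomposition
        have hR : ¬(Odd 1 ∧ 3 ≤ 1) := by rintro ⟨-, h⟩; omega
        refine iff_of_false ?_ hR
        rw [isUlam_iff_D (by simp)]
        rintro ⟨p, hp, -⟩
        rcases D_W2_cases hp with ⟨a', ha, rfl⟩ | rfl | rfl | ⟨b', hb, rfl⟩
        · omega
        · exact not_isUlam_W1_11 hp.2.2.2.1
        · exact hp.2.2.2.2.1 rfl
        · obtain rfl : b' = 0 := by omega
          have := hp.2.2.1
          rw [ih] at this
          omega
      · -- n even ≥ 2, b = n+1 odd ≥ 3 : unique decomposition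
        have hO : Odd (n+1) := Nat.odd_iff.mpr (by rw [Nat.even_iff] at hE; omega)
        have hEn : Even n := by rw [Nat.even_iff]; rw [Nat.even_iff] at hE; omega
        have hR : Odd (n+1) ∧ 3 ≤ n+1 := And.intro hO (by rw [Nat.even_iff] at hE; omega)
        refine iff_of_true ?_ hR
        rw [isUlam_iff_D (by simp)]
        refine ⟨(W1 0 1, W1 0 (n+1)),
          ⟨W1_ne_nil _ _, W1_ne_nil _ _, isUlam_W1_0b 1, isUlam_W1_0b (n+1),
            ne_of_length (by simp <;> omega), cat_W2_mid2 0 (n+1)⟩, ?_⟩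
        rintro q hq
        rcases D_W2_cases hq with ⟨a', ha, rfl⟩ | rfl | rfl | ⟨b', hb, rfl⟩
        · omega
        · exact absurd ((isUlam_W1_1b (n+1)).mp hq.2.2.2.1) hE
        · rfl
        · obtain rfl : b' = n := by omega
          have := hq.2.2.1
          rw [ih] at this
          rw [Nat.even_iff] at hE
          rw [Nat.odd_iff] at this
          omega

lemma isUlam_W2_a0 (a : ℕ) : IsUlam (W2 a 0) ↔ Odd a ∧ 3 ≤ a := by
  rw [isUlam_W2_symm]; exact isUlam_W2_0b a

lemma isUlam_W2_1b (b : ℕ) : IsUlam (W2 1 b) ↔ Even b ∧ 2 ≤ b := by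
  induction b with
  | zero =>
    have hR : ¬(Even 0 ∧ 2 ≤ 0) := by rintro ⟨-, h⟩; omega
    refine iff_of_false ?_ hR
    rw [isUlam_iff_D (by simp)]
    rintro ⟨p, hp, -⟩
    rcases D_W2_cases hp with ⟨a', ha, rfl⟩ | rfl | rfl | ⟨b', hb, rfl⟩
    · obtain rfl : a' = 0 := by omega
      have := hp.2.2.2.1
      rw [isUlam_W2_0b] at this
      omega
    · exact hp.2.2.2.2.1 rfl
    · exact not_isUlam_W1_11 hp.2.2.1
    · omega
  | succ n ih =>
    by_cases hE : Even (n + 1)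
    · have hR : Even (n+1) ∧ 2 ≤ n+1 := And.intro hE (by have := hE; rw [Nat.even_iff] at this; omega)
      refine iff_of_true ?_ hR
      rw [isUlam_iff_D (by simp)]
      refine ⟨(W1 1 0, W1 1 (n+1)),
        ⟨W1_ne_nil _ _, W1_ne_nil _ _, isUlam_W1_a0 1, (isUlam_W1_1b (n+1)).mpr hE,
          ne_of_length (by simp), cat_W2_mid1 1 (n+1)⟩, ?_⟩
      rintro q hq
      rcases D_W2_cases hq with ⟨a', ha, rfl⟩ | rfl | rfl | ⟨b', hb, rfl⟩
      · obtain rfl : a' = 0 := by omega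
        have := hq.2.2.2.1
        rw [isUlam_W2_0b, Nat.odd_iff] at this
        rw [Nat.even_iff] at hE
        omega
      · rfl
      · exact absurd hq.2.2.1 not_isUlam_W1_11
      · obtain rfl : b' = n := by omega
        have := hq.2.2.1
        rw [ih, Nat.even_iff] at this
        rw [Nat.even_iff] at hE
        omega
    · rcases Nat.eq_zero_or_pos n with rfl | hn
      · have hR : ¬(Even 1 ∧ 2 ≤ 1) := by rintro ⟨-, h⟩; omega
        refine iff_of_false ?_ hR
        rw [isUlam_iff_D (by simp)]
        rintro ⟨p, hp, -⟩
        rcases D_W2_cases hp with ⟨a', ha, rfl⟩ | rfl | rfl | ⟨b', hb, rfl⟩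
        · obtain rfl : a' = 0 := by omega
          have := hp.2.2.2.1
          rw [isUlam_W2_0b] at this
          omega
        · exact absurd ((isUlam_W1_1b 1).mp hp.2.2.2.1) (by rw [Nat.even_iff]; omega)
        · exact not_isUlam_W1_11 hp.2.2.1
        · obtain rfl : b' = 0 := by omega
          have := hp.2.2.1
          rw [ih] at this
          omega
      · -- n even ≥ 2, b = n+1 odd : two decompositions
        have hEn : Even n := by rw [Nat.even_iff]; rw [Nat.even_iff] at hE; omega
        have hR : ¬(Even (n+1) ∧ 2 ≤ n+1) := by rintro ⟨h, -⟩; exact hE h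
        refine iff_of_false ?_ hR
        rw [isUlam_iff_D (by simp)]
        rintro ⟨p, -, hu⟩
        have e1 := hu ([false], W2 0 (n+1))
          ⟨by simp, W2_ne_nil _ _, isUlam_false,
            (isUlam_W2_0b (n+1)).mpr (And.intro (Nat.odd_iff.mpr (by rw [Nat.even_iff] at hE; omega)) (by have := hEn; rw [Nat.even_iff] at this; omega)),
            by apply ne_of_count; simp, cat_W2_l 0 (n+1)⟩
        have e2 := hu (W2 1 n, [false])
          ⟨W2_ne_nil _ _, by simp, ih.mpr (And.intro hEn (by have := hEn; rw [Nat.even_iff] at this; omega)), isUlam_false,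
            by apply ne_of_count; simp, cat_W2_r 1 n⟩
        have e := congrArg Prod.fst (e1.trans e2.symm)
        have := congrArg List.length e
        simp at this

lemma isUlam_W2_a1 (a : ℕ) : IsUlam (W2 a 1) ↔ Even a ∧ 2 ≤ a := by
  rw [isUlam_W2_symm]; exact isUlam_W2_1b a

lemma two_decomps {w : List Bool} {c1 c2 : List Bool × List Bool} (h2 : 2 ≤ w.length)
    (hD1 : D w c1) (hD2 : D w c2) (hne : c1 ≠ c2) : ¬ IsUlam w := by
  rw [isUlam_iff_D h2]
  rintro ⟨p, -, hu⟩
  exact hne ((hu c1 hD1).trans (hu c2 hD2).symm)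

lemma isUlam_W3_0b (b : ℕ) : IsUlam (W3 0 b) ↔ Even b ∧ 2 ≤ b := by
  induction b with
  | zero =>
    have hR : ¬(Even 0 ∧ 2 ≤ 0) := by rintro ⟨-, h⟩; omega
    refine iff_of_false ?_ hR
    rw [isUlam_iff_D (by simp)]
    rintro ⟨p, hp, -⟩
    rcases D_W3_cases hp with ⟨a', ha, rfl⟩ | rfl | rfl | rfl | rfl | ⟨b', hb, rfl⟩
    · omega
    · have := hp.2.2.2.1; rw [isUlam_W2_1b] at this; omega
    · have := hp.2.2.2.1; rw [isUlam_W2_0b] at this; omega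
    · have := hp.2.2.1; rw [isUlam_W2_0b] at this
      rcases this with ⟨h, -⟩; rw [Nat.odd_iff] at h; omega
    · have := hp.2.2.1; rw [isUlam_W2_0b] at this; omega
    · omega
  | succ n ih =>
    by_cases hE : Even (n + 1)
    · have h2 : 2 ≤ n + 1 := by have := hE; rw [Nat.even_iff] at this; omega
      refine iff_of_true ?_ (And.intro hE h2)
      rw [isUlam_iff_D (by simp)]
      refine ⟨(W1 0 0, W2 1 (n+1)),
        ⟨W1_ne_nil _ _, W2_ne_nil _ _, isUlam_W1_a0 0, (isUlam_W2_1b (n+1)).mpr ⟨hE, h2⟩,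
          by apply ne_of_count; simp, cat_W3_mid1 0 (n+1)⟩, ?_⟩
      rintro q hq
      rcases D_W3_cases hq with ⟨a', ha, rfl⟩ | rfl | rfl | rfl | rfl | ⟨b', hb, rfl⟩
      · omega
      · rfl
      · have := hq.2.2.2.1; rw [isUlam_W2_0b, Nat.odd_iff] at this
        rw [Nat.even_iff] at hE; omega
      · have := hq.2.2.1; rw [isUlam_W2_0b] at this
        rcases this with ⟨h, -⟩; rw [Nat.odd_iff] at h; omega
      · have := hq.2.2.1; rw [isUlam_W2_0b] at this; omega
      · obtain rfl : b' = n := by omega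
        have := hq.2.2.1; rw [ih, Nat.even_iff] at this
        rw [Nat.even_iff] at hE; omega
    · have hR : ¬(Even (n+1) ∧ 2 ≤ n+1) := by rintro ⟨h, -⟩; exact hE h
      refine iff_of_false ?_ hR
      rcases Nat.eq_zero_or_pos n with rfl | hn
      · -- b = 1 : no decomposition
        rw [isUlam_iff_D (by simp)]
        rintro ⟨p, hp, -⟩
        rcases D_W3_cases hp with ⟨a', ha, rfl⟩ | rfl | rfl | rfl | rfl | ⟨b', hb, rfl⟩
        · omega
        · have := hp.2.2.2.1; rw [isUlam_W2_1b, Nat.even_iff] at this; omega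
        · have := hp.2.2.2.1; rw [isUlam_W2_0b] at this; omega
        · have := hp.2.2.1; rw [isUlam_W2_0b] at this
          rcases this with ⟨h, -⟩; rw [Nat.odd_iff] at h; omega
        · have := hp.2.2.1; rw [isUlam_W2_0b] at this; omega
        · obtain rfl : b' = 0 := by omega
          have := hp.2.2.1; rw [ih] at this; omega
      · -- n even ≥ 2 : two decompositions
        have hEn : Even n := by rw [Nat.even_iff]; rw [Nat.even_iff] at hE; omega
        have hn2 : 2 ≤ n := by have := hEn; rw [Nat.even_iff] at this; omega
        refine two_decomps (by simp) (c1 := (W1 0 1, W2 0 (n+1))) (c2 := (W3 0 n, [false]))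
          ⟨W1_ne_nil _ _, W2_ne_nil _ _, isUlam_W1_0b 1,
            (isUlam_W2_0b (n+1)).mpr ⟨Nat.odd_iff.mpr (by rw [Nat.even_iff] at hE; omega), by omega⟩,
            by apply ne_of_count; simp, cat_W3_mid2 0 (n+1)⟩
          ⟨W3_ne_nil _ _, by simp, ih.mpr ⟨hEn, hn2⟩, isUlam_false,
            by apply ne_of_count; simp, cat_W3_r 0 n⟩
          (by intro e; have := congrArg (fun p => List.count true p.1) e; simp at this)

lemma isUlam_W3_a0 (a : ℕ) : IsUlam (W3 a 0) ↔ Even a ∧ 2 ≤ a := by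
  rw [isUlam_W3_symm]; exact isUlam_W3_0b a

lemma not_isUlam_W3_pos : ∀ s a b, a + b ≤ s → 1 ≤ a → 1 ≤ b → ¬ IsUlam (W3 a b) := by
  intro s
  induction s with
  | zero => intro a b h ha hb; omega
  | succ s ih =>
    intro a b hs ha hb
    by_cases hEa : Even a
    · -- a even ≥ 2 : two decompositions
      have ha2 : 2 ≤ a := by have := hEa; rw [Nat.even_iff] at this; omega
      have hc1 : D (W3 a b) (W2 a 1, W1 0 b) :=
        ⟨W2_ne_nil _ _, W1_ne_nil _ _, (isUlam_W2_a1 a).mpr ⟨hEa, ha2⟩, isUlam_W1_0b b,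
          by apply ne_of_count; simp, cat_W3_mid4 a b⟩
      by_cases hEb : Even b
      · have hb2 : 2 ≤ b := by have := hEb; rw [Nat.even_iff] at this; omega
        refine two_decomps (by simp) (c2 := (W1 a 0, W2 1 b)) hc1
          ⟨W1_ne_nil _ _, W2_ne_nil _ _, isUlam_W1_a0 a, (isUlam_W2_1b b).mpr ⟨hEb, hb2⟩,
            by apply ne_of_count; simp, cat_W3_mid1 a b⟩
          (by intro e; have := congrArg (fun p => List.count true p.1) e; simp at this)
      · rcases Nat.lt_or_ge b 2 with hb1 | hb3
        · obtain rfl : b = 1 := by omega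
          refine two_decomps (by simp) (c2 := (W3 a 0, [false])) hc1
            ⟨W3_ne_nil _ _, by simp, (isUlam_W3_a0 a).mpr ⟨hEa, ha2⟩, isUlam_false,
              by apply ne_of_count; simp, cat_W3_r a 0⟩
            (by intro e; have := congrArg (fun p => List.count true p.1) e; simp at this)
        · have hb3' : 3 ≤ b := by rw [Nat.even_iff] at hEb; omega
          refine two_decomps (by simp) (c2 := (W1 a 1, W2 0 b)) hc1
            ⟨W1_ne_nil _ _, W2_ne_nil _ _, (isUlam_W1_a1 a).mpr hEa,
              (isUlam_W2_0b b).mpr ⟨Nat.odd_iff.mpr (by rw [Nat.even_iff] at hEb; omega), hb3'⟩,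
              by apply ne_of_count; simp, cat_W3_mid2 a b⟩
            (by intro e; have := congrArg (fun p => List.count true p.1) e; simp at this)
    · by_cases hEb : Even b
      · -- a odd, b even ≥ 2 : two decompositions
        have hb2 : 2 ≤ b := by have := hEb; rw [Nat.even_iff] at this; omega
        have hc1 : D (W3 a b) (W1 a 0, W2 1 b) :=
          ⟨W1_ne_nil _ _, W2_ne_nil _ _, isUlam_W1_a0 a, (isUlam_W2_1b b).mpr ⟨hEb, hb2⟩,
            by apply ne_of_count; simp, cat_W3_mid1 a b⟩
        rcases Nat.lt_or_ge a 2 with ha1 | ha3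
        · obtain rfl : a = 1 := by omega
          refine two_decomps (by simp) (c2 := ([false], W3 0 b)) hc1
            ⟨by simp, W3_ne_nil _ _, isUlam_false, (isUlam_W3_0b b).mpr ⟨hEb, hb2⟩,
              by apply ne_of_count; simp, cat_W3_l 0 b⟩
            (by intro e; have := congrArg (fun p => List.count true p.1) e; simp at this)
        · have ha3' : 3 ≤ a := by rw [Nat.even_iff] at hEa; omega
          refine two_decomps (by simp) (c2 := (W2 a 0, W1 1 b)) hc1
            ⟨W2_ne_nil _ _, W1_ne_nil _ _, (isUlam_W2_a0 a).mpr ⟨Nat.odd_iff.mpr (by rw [Nat.even_iff] at hEa; omega), ha3'⟩,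
              (isUlam_W1_1b b).mpr hEb,
              by apply ne_of_count; simp, cat_W3_mid3 a b⟩
            (by intro e; have := congrArg (fun p => List.count true p.1) e; simp at this)
      · -- a odd, b odd : no decomposition
        rw [isUlam_iff_D (by simp)]
        rintro ⟨p, hp, -⟩
        rcases D_W3_cases hp with ⟨a', hpa, rfl⟩ | rfl | rfl | rfl | rfl | ⟨b', hpb, rfl⟩
        · obtain rfl : a' = a - 1 := by omega
          have hu := hp.2.2.2.1
          rcases Nat.eq_zero_or_pos (a - 1) with h0 | h1
          · rw [h0, isUlam_W3_0b] at hu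
            rcases hu with ⟨h, -⟩
            rw [Nat.even_iff] at h; rw [Nat.even_iff] at hEb; omega
          · exact ih (a-1) b (by omega) h1 hb hu
        · have := hp.2.2.2.1; rw [isUlam_W2_1b] at this
          rcases this with ⟨h, -⟩
          rw [Nat.even_iff] at h; rw [Nat.even_iff] at hEb; omega
        · have := hp.2.2.1; rw [isUlam_W1_a1] at this
          exact hEa this
        · have := hp.2.2.2.1; rw [isUlam_W1_1b] at this
          exact hEb this
        · have := hp.2.2.1; rw [isUlam_W2_a1] at this
          exact hEa this.1
        · obtain rfl : b' = b - 1 := by omega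
          have hu := hp.2.2.1
          rcases Nat.eq_zero_or_pos (b - 1) with h0 | h1
          · rw [h0, isUlam_W3_a0] at hu
            rcases hu with ⟨h, -⟩
            rw [Nat.even_iff] at h; rw [Nat.even_iff] at hEa; omega
          · exact ih a (b-1) (by omega) ha h1 hu

theorem ulam_10101 (a b : ℕ) (hab : 1 ≤ a + b) :
    IsUlam (List.replicate a false ++ [true, false, true, false, true] ++
        List.replicate b false) ↔
      Even a ∧ Even b ∧ (a = 0 ∨ b = 0) := by
  show IsUlam (W3 a b) ↔ _
  rcases Nat.eq_zero_or_pos a with rfl | ha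
  · rw [isUlam_W3_0b]
    constructor
    · rintro ⟨h1, -⟩; exact ⟨Even.zero, h1, Or.inl rfl⟩
    · rintro ⟨-, h1, -⟩
      refine ⟨h1, ?_⟩
      have := h1; rw [Nat.even_iff] at this; omega
  rcases Nat.eq_zero_or_pos b with rfl | hb
  · rw [isUlam_W3_a0]
    constructor
    · rintro ⟨h1, -⟩; exact ⟨h1, Even.zero, Or.inr rfl⟩
    · rintro ⟨h1, -, -⟩
      refine ⟨h1, ?_⟩
      have := h1; rw [Nat.even_iff] at this; omega
  refine iff_of_false (not_isUlam_W3_pos (a + b) a b le_rfl ha hb) ?_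
  rintro ⟨-, -, h | h⟩ <;> omega
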